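/- Let p be a sufficiently large prime and A ⊆ F_p with |A| ≥ 2√p + 1. Then ⌊√p⌋*A = F_p, i.e., every element of F_p is a sum of exactly ⌊√p⌋ distinct elements of A. -/

import Mathlib

open Finset Polynomial


lemma lag_basis_coeff {F : Type} [Field F] [DecidableEq F] (S : Finset F) (t : ℕ)
    (hS : S.card = t + 1) (s : F) (hs : s ∈ S) :
    (Lagrange.basis S id s).coeff t = (∏ s' ∈ S.erase s, (s - s'))⁻¹ := by
  have hinj : Set.InjOn id (S : Set F) := Function.injective_id.injOn
  have hnd : (Lagrange.basis S id s).natDegree = t := by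
    rw [Lagrange.natDegree_basis hinj hs, hS]; simp
  rw [← hnd, ← Polynomial.leadingCoeff]
  unfold Lagrange.basis
  rw [Polynomial.leadingCoeff_prod]
  rw [← Finset.prod_inv_distrib]
  apply Finset.prod_congr rfl
  intro j hj
  have hne : (id s : F) ≠ id j := by
    intro h; exact (Finset.mem_erase.mp hj).1 (by simpa using h.symm)
  unfold Lagrange.basisDivisor
  rw [Polynomial.leadingCoeff_mul, Polynomial.leadingCoeff_C,
    (Polynomial.monic_X_sub_C _).leadingCoeff, mul_one]
  simp

lemma lag_coeff {F : Type} [Field F] [DecidableEq F] (S : Finset F) (t d : ℕ)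
    (hS : S.card = t + 1) (hd : d ≤ t) :
    ∑ s ∈ S, s ^ d * (∏ s' ∈ S.erase s, (s - s'))⁻¹ = if d = t then 1 else 0 := by
  have hinj : Set.InjOn id (S : Set F) := Function.injective_id.injOn
  have hdeg : (X ^ d : F[X]).degree < S.card := by
    rw [Polynomial.degree_X_pow, hS]
    exact_mod_cast Nat.lt_succ_of_le hd
  have hinterp := Lagrange.eq_interpolate hinj hdeg
  have := congrArg (fun q : F[X] => q.coeff t) hinterp
  simp only [Lagrange.interpolate_apply] at this
  rw [Polynomial.finset_sum_coeff] at this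
  simp only [Polynomial.coeff_C_mul, Polynomial.eval_pow, Polynomial.eval_X, id] at this
  rw [Polynomial.coeff_X_pow] at this
  calc ∑ s ∈ S, s ^ d * (∏ s' ∈ S.erase s, (s - s'))⁻¹
      = ∑ s ∈ S, s ^ d * (Lagrange.basis S id s).coeff t := by
        refine Finset.sum_congr rfl fun s hs => ?_
        rw [lag_basis_coeff S t hS s hs]
    _ = if d = t then 1 else 0 := by rw [← this]; simp [eq_comm]


lemma perm_sum_reindex {R : Type} [CommRing R] {m : ℕ} (h : Fin m → Fin m → R) :
    ∑ σ : Equiv.Perm (Fin m), ((Equiv.Perm.sign σ : ℤ) : R) * ∏ i, h i (σ i)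
      = ∑ σ : Equiv.Perm (Fin m), ((Equiv.Perm.sign σ : ℤ) : R) * ∏ i, h (σ i) i := by
  apply Fintype.sum_bijective (fun σ : Equiv.Perm (Fin m) => σ⁻¹)
    (Equiv.inv (Equiv.Perm (Fin m))).bijective
  intro σ
  rw [Equiv.Perm.sign_inv]
  congr 1
  calc ∏ i, h i (σ i) = ∏ i, h (σ⁻¹ (σ i)) (σ i) := by simp
    _ = ∏ i, h (σ⁻¹ i) i := Equiv.prod_comp σ fun i => h (σ⁻¹ i) i

lemma vand_expand {F : Type} [CommRing F] {m : ℕ} (x : Fin m → F) :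
    (Matrix.vandermonde x).det
      = ∑ σ : Equiv.Perm (Fin m), ((Equiv.Perm.sign σ : ℤ) : F) * ∏ i, x i ^ (σ i : ℕ) := by
  rw [Matrix.det_apply]
  have : ∀ σ : Equiv.Perm (Fin m), (Equiv.Perm.sign σ) • ∏ i, Matrix.vandermonde x (σ i) i
      = ((Equiv.Perm.sign σ : ℤ) : F) * ∏ i, x (σ i) ^ (i : ℕ) := by
    intro σ; rw [Units.smul_def, zsmul_eq_mul]; rfl
  simp only [this]
  exact (perm_sum_reindex (fun i j => x i ^ (j : ℕ))).symm

lemma triple_swap {ι κ M : Type*} [AddCommMonoid M] {A : Finset ι} {R : Finset ℕ}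
    {EE : ℕ → Finset κ} (f : ℕ → κ → ι → M) :
    ∑ k ∈ R, ∑ e ∈ EE k, ∑ σ ∈ A, f k e σ = ∑ σ ∈ A, ∑ k ∈ R, ∑ e ∈ EE k, f k e σ :=
  (Finset.sum_congr rfl fun k _ => Finset.sum_comm).trans Finset.sum_comm

lemma master {F : Type} [Field F] [DecidableEq F] {m : ℕ} (S : Fin m → Finset F)
    (t : Fin m → ℕ) (C : Finset F)
    (hcard : ∀ i, (S i).card = t i + 1)
    (hsum : ∑ i, t i = C.card + ∑ i : Fin m, (i : ℕ))
    (hfac : ((C.card).factorial : F) ≠ 0)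
    (hdet : (((∏ i : Fin m, ∏ j ∈ Finset.Ioi i, ((t j : ℤ) - (t i : ℤ))) : ℤ) : F) ≠ 0)
    (hvan : ∀ x ∈ Fintype.piFinset S, Function.Injective x → (∑ i, x i) ∈ C) :
    False := by
  set N := C.card with hN
  set w : Fin m → F → F := fun i s => (∏ s' ∈ (S i).erase s, (s - s'))⁻¹ with hw
  set M : Fin m → ℕ → F := fun i d => ∑ s ∈ S i, s ^ d * w i s with hM
  have hMle : ∀ i d, d ≤ t i → M i d = if d = t i then 1 else 0 := by
    intro i d hd; exact lag_coeff (S i) (t i) d (hcard i) hd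
  -- the polynomial ∏ (X - c)
  set Q : F[X] := ∏ c ∈ C, (X - Polynomial.C c) with hQ
  have hQm : Q.Monic := monic_prod_of_monic _ _ fun c _ => monic_X_sub_C c
  have hQd : Q.natDegree = N := by
    rw [hQ, natDegree_prod_of_monic _ _ fun c _ => monic_X_sub_C c]
    simp [natDegree_X_sub_C]
    exact hN.symm
  have hQN : Q.coeff N = 1 := by
    have := hQm.coeff_natDegree; rwa [hQd] at this
  have hEval : ∀ T : F, ∏ c ∈ C, (T - c) = ∑ k ∈ range (N + 1), Q.coeff k * T ^ k := by
    intro T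
    have h1 : ∏ c ∈ C, (T - c) = Q.eval T := by
      rw [hQ, eval_prod]; simp
    rw [h1, eval_eq_sum_range' (by rw [hQd]; exact Nat.lt_succ_self N)]
  set E : F := ∑ x ∈ Fintype.piFinset S,
      (Matrix.vandermonde x).det * (∏ c ∈ C, ((∑ i, x i) - c)) * ∏ i, w i (x i) with hE
  -- E = 0 since the polynomial vanishes on the grid
  have hE0 : E = 0 := by
    rw [hE]
    apply Finset.sum_eq_zero
    intro x hx
    by_cases hinj : Function.Injective x
    · have : (∑ i, x i) ∈ C := hvan x hx hinj
      rw [Finset.prod_eq_zero this (sub_self _)]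
      ring
    · simp only [Function.Injective] at hinj
      push_neg at hinj
      obtain ⟨i, j, hxij, hij⟩ := hinj
      have : (Matrix.vandermonde x).det = 0 := by
        apply Matrix.det_zero_of_row_eq hij
        funext k
        simp [Matrix.vandermonde, hxij]
      rw [this]; ring
  -- expansion
  have key : ∀ x : Fin m → F,
      (Matrix.vandermonde x).det * (∏ c ∈ C, ((∑ i, x i) - c)) * ∏ i, w i (x i)
        = ∑ σ : Equiv.Perm (Fin m), ∑ k ∈ range (N + 1),
            ∑ e ∈ piAntidiag (univ : Finset (Fin m)) k,
              (((Equiv.Perm.sign σ : ℤ) : F) * Q.coeff k * (Nat.multinomial univ e : F))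
                * ∏ i, (x i ^ ((σ i : ℕ) + e i) * w i (x i)) := by
    intro x
    rw [vand_expand, hEval]
    have hpow : ∀ k, (∑ i, x i) ^ k = ∑ e ∈ piAntidiag (univ : Finset (Fin m)) k,
        (Nat.multinomial univ e : F) * ∏ i, x i ^ e i :=
      fun k => Finset.sum_pow_eq_sum_piAntidiag (univ : Finset (Fin m)) x k
    simp only [hpow]
    simp only [Finset.sum_mul, Finset.mul_sum]
    rw [triple_swap]
    apply Finset.sum_congr rfl
    intro σ _
    apply Finset.sum_congr rfl
    intro k _
    apply Finset.sum_congr rfl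
    intro e _
    simp only [pow_add, Finset.prod_mul_distrib]
    ring
  have hgrid : ∀ d : Fin m → ℕ,
      ∑ x ∈ Fintype.piFinset S, ∏ i, (x i ^ d i * w i (x i)) = ∏ i, M i (d i) :=
    fun d => (Finset.prod_univ_sum S fun i s => s ^ d i * w i s).symm
  have hE2 : E = ∑ σ : Equiv.Perm (Fin m), ∑ k ∈ range (N + 1),
      ∑ e ∈ piAntidiag (univ : Finset (Fin m)) k,
        (((Equiv.Perm.sign σ : ℤ) : F) * Q.coeff k * (Nat.multinomial univ e : F))
          * ∏ i, M i ((σ i : ℕ) + e i) := by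
    rw [hE]
    rw [Finset.sum_congr rfl fun x _ => key x]
    rw [Finset.sum_comm]
    refine Finset.sum_congr rfl fun σ _ => ?_
    rw [Finset.sum_comm]
    refine Finset.sum_congr rfl fun k _ => ?_
    rw [Finset.sum_comm]
    refine Finset.sum_congr rfl fun e _ => ?_
    rw [← Finset.mul_sum, hgrid]
  -- per-σ reduction
  have hσsum : ∀ σ : Equiv.Perm (Fin m), ∑ i, ((σ i : ℕ)) = ∑ i : Fin m, (i : ℕ) :=
    fun σ => Equiv.sum_comp σ fun j => (j : ℕ)
  have hvanish : ∀ (σ : Equiv.Perm (Fin m)), ∀ k ∈ range (N + 1),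
      ∀ e ∈ piAntidiag (univ : Finset (Fin m)) k,
      (¬ (k = N ∧ ∀ i, (σ i : ℕ) + e i = t i)) → ∏ i, M i ((σ i : ℕ) + e i) = 0 := by
    intro σ k hk e he hne
    rw [Finset.mem_range] at hk
    rw [Finset.mem_piAntidiag] at he
    obtain ⟨hek, -⟩ := he
    have hexists : ∃ i, (σ i : ℕ) + e i < t i := by
      by_contra hc
      push_neg at hc
      have hptwise : ∀ i ∈ (univ : Finset (Fin m)), t i ≤ (σ i : ℕ) + e i := fun i _ => hc i
      have hsum2 : ∑ i, ((σ i : ℕ) + e i) = (∑ i : Fin m, (i : ℕ)) + k := by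
        rw [Finset.sum_add_distrib, hσsum σ, hek]
      have heq : ∀ i, (σ i : ℕ) + e i = t i := by
        intro i
        by_contra hne2
        have hstrict : t i < (σ i : ℕ) + e i := lt_of_le_of_ne (hc i) fun h => hne2 h.symm
        have := Finset.sum_lt_sum hptwise ⟨i, Finset.mem_univ i, hstrict⟩
        omega
      have hkN : k = N := by
        have h1 : ∑ i, ((σ i : ℕ) + e i) = ∑ i, t i := Finset.sum_congr rfl fun i _ => heq i
        omega
      exact hne ⟨hkN, heq⟩
    obtain ⟨i, hi⟩ := hexists
    exact Finset.prod_eq_zero (Finset.mem_univ i)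
      (by rw [hMle i _ (le_of_lt hi), if_neg (Nat.ne_of_lt hi)])
  have hE3 : E = ∑ σ : Equiv.Perm (Fin m), ((Equiv.Perm.sign σ : ℤ) : F) *
      (if ∀ i, (σ i : ℕ) ≤ t i
        then (Nat.multinomial univ (fun i => t i - (σ i : ℕ)) : F) else 0) := by
    rw [hE2]
    apply Finset.sum_congr rfl
    intro σ _
    by_cases hσt : ∀ i, (σ i : ℕ) ≤ t i
    · rw [if_pos hσt]
      have he₀sum : ∑ i, (t i - (σ i : ℕ)) = N := by
        have h1 : ∑ i, (t i - (σ i : ℕ)) = ∑ i, t i - ∑ i, (σ i : ℕ) :=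
          Finset.sum_tsub_distrib univ fun i _ => hσt i
        have h2 := hσsum σ
        omega
      have hside1 : ∀ k ∈ range (N + 1), k ≠ N →
          (∑ e ∈ piAntidiag (univ : Finset (Fin m)) k,
            (((Equiv.Perm.sign σ : ℤ) : F) * Q.coeff k * (Nat.multinomial univ e : F))
              * ∏ i, M i ((σ i : ℕ) + e i)) = 0 := by
        intro k hk hkN
        apply Finset.sum_eq_zero
        intro e he
        rw [hvanish σ k hk e he (fun h => hkN h.1), mul_zero]
      rw [Finset.sum_eq_single_of_mem N (Finset.self_mem_range_succ N) hside1]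
      have hmem0 : (fun i => t i - (σ i : ℕ)) ∈ piAntidiag (univ : Finset (Fin m)) N := by
        rw [Finset.mem_piAntidiag]
        exact ⟨he₀sum, fun i _ => Finset.mem_univ i⟩
      have hside2 : ∀ e ∈ piAntidiag (univ : Finset (Fin m)) N,
          e ≠ (fun i => t i - (σ i : ℕ)) →
          (((Equiv.Perm.sign σ : ℤ) : F) * Q.coeff N * (Nat.multinomial univ e : F))
            * ∏ i, M i ((σ i : ℕ) + e i) = 0 := by
        intro e he hne
        rw [hvanish σ N (Finset.self_mem_range_succ N) e he, mul_zero]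
        rintro ⟨-, heq⟩
        exact hne (funext fun i => by have := heq i; omega)
      rw [Finset.sum_eq_single_of_mem _ hmem0 hside2]
      have hMt : ∏ i, M i ((σ i : ℕ) + (t i - (σ i : ℕ))) = 1 := by
        apply Finset.prod_eq_one
        intro i _
        have h3 : (σ i : ℕ) + (t i - (σ i : ℕ)) = t i := by have := hσt i; omega
        rw [h3, hMle i (t i) le_rfl, if_pos rfl]
      rw [hMt, hQN]
      ring
    · rw [if_neg hσt, mul_zero]
      apply Finset.sum_eq_zero
      intro k hk
      apply Finset.sum_eq_zero
      intro e he
      rw [hvanish σ k hk e he, mul_zero]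
      rintro ⟨-, heq⟩
      exact hσt fun i => by have := heq i; omega
  -- the integer determinant
  set D : ℤ := ∑ σ : Equiv.Perm (Fin m), ((Equiv.Perm.sign σ : ℤ))
      * ∏ i, ((t i).descFactorial (σ i : ℕ) : ℤ) with hD
  have hDdet : D = ∏ i : Fin m, ∏ j ∈ Finset.Ioi i, ((t j : ℤ) - (t i : ℤ)) := by
    have h2 := perm_sum_reindex (R := ℤ) (fun i j => ((t i).descFactorial (j : ℕ) : ℤ))
    simp only [Int.cast_id] at h2
    rw [hD, h2]
    have h1 : ∑ σ : Equiv.Perm (Fin m), ((Equiv.Perm.sign σ : ℤ))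
          * ∏ i, ((t (σ i)).descFactorial (i : ℕ) : ℤ)
        = (Matrix.of fun i j : Fin m => (descPochhammer ℤ (j : ℕ)).eval ((t i : ℤ))).det := by
      rw [Matrix.det_apply']
      simp only [Int.cast_id]
      apply Finset.sum_congr rfl
      intro σ _
      congr 1
      apply Finset.prod_congr rfl
      intro i _
      rw [Matrix.of_apply, descPochhammer_eval_eq_descFactorial]
    rw [h1, ← Matrix.det_eval_matrixOfPolynomials_eq_det_vandermonde (fun i => (t i : ℤ))
      (fun i => descPochhammer ℤ (i : ℕ)) (fun i => descPochhammer_natDegree ℤ (i : ℕ))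
      (fun i => monic_descPochhammer ℤ (i : ℕ)), Matrix.det_vandermonde]
  -- the ℕ identity
  have hu : ∀ σ : Equiv.Perm (Fin m), (∏ i, (t i).factorial)
      * (if ∀ i, (σ i : ℕ) ≤ t i
          then Nat.multinomial univ (fun i => t i - (σ i : ℕ)) else 0)
      = N.factorial * ∏ i, (t i).descFactorial (σ i : ℕ) := by
    intro σ
    by_cases hσt : ∀ i, (σ i : ℕ) ≤ t i
    · rw [if_pos hσt]
      have h1 : ∀ i : Fin m, (t i).factorial
          = (t i - (σ i : ℕ)).factorial * (t i).descFactorial (σ i : ℕ) :=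
        fun i => (Nat.factorial_mul_descFactorial (hσt i)).symm
      have h2 : ∑ i, (t i - (σ i : ℕ)) = N := by
        have h3 : ∑ i, (t i - (σ i : ℕ)) = ∑ i, t i - ∑ i, (σ i : ℕ) :=
          Finset.sum_tsub_distrib univ fun i _ => hσt i
        have h4 := hσsum σ
        omega
      calc (∏ i, (t i).factorial)
          * Nat.multinomial univ (fun i => t i - (σ i : ℕ))
          = ((∏ i, (t i - (σ i : ℕ)).factorial)
              * Nat.multinomial univ (fun i => t i - (σ i : ℕ)))
            * ∏ i, (t i).descFactorial (σ i : ℕ) := by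
            rw [Finset.prod_congr rfl fun i _ => h1 i, Finset.prod_mul_distrib]; ring
        _ = N.factorial * ∏ i, (t i).descFactorial (σ i : ℕ) := by
            rw [Nat.multinomial_spec, h2]
    · rw [if_neg hσt, Nat.mul_zero]
      push_neg at hσt
      obtain ⟨i, hi⟩ := hσt
      rw [Finset.prod_eq_zero (Finset.mem_univ i)
        (Nat.descFactorial_eq_zero_iff_lt.mpr hi), Nat.mul_zero]
  -- final contradiction
  have final : ((∏ i, (t i).factorial : ℕ) : F) * E = (N.factorial : F) * ((D : ℤ) : F) := by
    rw [hE3, Finset.mul_sum, hD]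
    push_cast
    rw [Finset.mul_sum]
    apply Finset.sum_congr rfl
    intro σ _
    have hcast := congrArg (fun n : ℕ => (n : F)) (hu σ)
    push_cast at hcast
    calc (∏ i, ((t i).factorial : F)) * (((Equiv.Perm.sign σ : ℤ) : F) *
          (if ∀ i, (σ i : ℕ) ≤ t i
            then (Nat.multinomial univ (fun i => t i - (σ i : ℕ)) : F) else 0))
        = ((Equiv.Perm.sign σ : ℤ) : F) * ((∏ i, ((t i).factorial : F)) *
          (if ∀ i, (σ i : ℕ) ≤ t i
            then (Nat.multinomial univ (fun i => t i - (σ i : ℕ)) : F) else 0)) := by ring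
      _ = ((Equiv.Perm.sign σ : ℤ) : F) * ((N.factorial : F)
            * ∏ i, ((t i).descFactorial (σ i : ℕ) : F)) := by rw [hcast]
      _ = (N.factorial : F) * (((Equiv.Perm.sign σ : ℤ) : F)
            * ∏ i, ((t i).descFactorial (σ i : ℕ) : F)) := by ring
  rw [hE0, mul_zero] at final
  have hDne : ((D : ℤ) : F) ≠ 0 := by rw [hDdet]; exact hdet
  exact (mul_ne_zero hfac hDne) final.symm

theorem sqrt_star_eq_univ :
    ∃ p₀ : ℕ, ∀ p : ℕ, p₀ ≤ p → p.Prime → ∀ A : Finset (ZMod p),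
      2 * Real.sqrt p + 1 ≤ (A.card : ℝ) →
      ∀ y : ZMod p, ∃ B ⊆ A, B.card = Nat.sqrt p ∧ B.sum id = y := by
  use 100
  intro p hp0 hp A hA y
  haveI : Fact p.Prime := ⟨hp⟩
  haveI : NeZero p := ⟨hp.ne_zero⟩
  by_contra hcon
  push_neg at hcon
  set s := Nat.sqrt p with hs
  -- basic numeric facts
  have hs10 : 10 ≤ s := by
    rw [hs, Nat.le_sqrt]; omega
  have hs2 : s * s ≤ p := by have := Nat.sqrt_le' p; nlinarith
  have hlt : p < (s + 1) * (s + 1) := by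
    have := Nat.lt_succ_sqrt' p
    nlinarith
  have hsne : s * s ≠ p := by
    intro h
    rcases (hp.eq_one_or_self_of_dvd s ⟨s, h.symm⟩) with h1 | h1
    · omega
    · rw [h1] at h; nlinarith
  have hslt : s * s < p := lt_of_le_of_ne hs2 hsne
  -- |A| ≥ 2s + 2
  have hn : 2 * s + 2 ≤ A.card := by
    have h1 : (s : ℝ) < Real.sqrt p := by
      rw [← Real.sqrt_sq (by positivity : (0:ℝ) ≤ (s:ℝ))]
      apply Real.sqrt_lt_sqrt (by positivity)
      have hcast : ((s * s : ℕ) : ℝ) < ((p : ℕ) : ℝ) := Nat.cast_lt.mpr hslt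
      push_cast at hcast
      nlinarith
    have h2 : (2 * s + 1 : ℝ) < (A.card : ℝ) := by nlinarith
    have h3 : 2 * s + 1 < A.card := by exact_mod_cast h2
    omega
  -- the exponents
  set q := (p - 1) / s with hq
  set r := (p - 1) % s with hr
  have hqr : q * s + r = p - 1 := by
    rw [hq, hr, Nat.mul_comm]
    exact Nat.div_add_mod _ _
  have hrs : r < s := Nat.mod_lt _ (by omega)
  have hqs : q < s + 2 := by
    rw [hq, Nat.div_lt_iff_lt_mul (by omega : 0 < s)]
    have hexp1 : (s + 1) * (s + 1) = s * s + 2 * s + 1 := by ring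
    have hexp2 : (s + 2) * s = s * s + 2 * s := by ring
    omega
  set t : Fin s → ℕ := fun i => (i : ℕ) + q + (if s - r ≤ (i : ℕ) then 1 else 0) with ht
  have htmono : ∀ i j : Fin s, i < j → t i < t j := by
    intro i j hij
    have : (i : ℕ) < (j : ℕ) := hij
    rw [ht]
    simp only
    split_ifs <;> omega
  have htle : ∀ i : Fin s, t i ≤ 2 * s + 1 := by
    intro i
    have : (i : ℕ) < s := i.isLt
    rw [ht]; simp only; split_ifs <;> omega
  have h2s1p : 2 * s + 1 < p := by nlinarith
  -- sum of t
  have htsum : ∑ i, t i = (p - 1) + ∑ i : Fin s, (i : ℕ) := by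
    rw [ht]
    rw [Finset.sum_add_distrib, Finset.sum_add_distrib]
    have h1 : ∑ _i : Fin s, q = s * q := by simp [Finset.sum_const, mul_comm]
    have h2 : ∑ i : Fin s, (if s - r ≤ (i : ℕ) then 1 else 0) = r := by
      rw [Fin.sum_univ_eq_sum_range (fun i => if s - r ≤ i then 1 else 0) s]
      rw [Finset.range_eq_Ico, ← Finset.sum_Ico_consecutive _ (by omega : 0 ≤ s - r) (by omega : s - r ≤ s)]
      rw [Finset.sum_ite_of_false, Finset.sum_ite_of_true]
      · simp only [Finset.sum_const_zero, Finset.sum_const, Nat.card_Ico, smul_eq_mul, mul_one, zero_add]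
        omega
      · intro i hi; exact (Finset.mem_Ico.mp hi).1
      · intro i hi; have := (Finset.mem_Ico.mp hi).2; omega
    rw [h1, h2]
    have hc : s * q = q * s := Nat.mul_comm s q
    omega
  -- the sets S i
  have hchoose : ∀ i : Fin s, t i + 1 ≤ A.card := by
    intro i; have := htle i; omega
  set S : Fin s → Finset (ZMod p) := fun i =>
    (Finset.exists_subset_card_eq (hchoose i)).choose with hS
  have hSsub : ∀ i, S i ⊆ A := fun i =>
    (Finset.exists_subset_card_eq (hchoose i)).choose_spec.1
  have hScard : ∀ i, (S i).card = t i + 1 := fun i =>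
    (Finset.exists_subset_card_eq (hchoose i)).choose_spec.2
  -- the set C
  set C : Finset (ZMod p) := Finset.univ.erase y with hC
  have hCcard : C.card = p - 1 := by
    rw [hC, Finset.card_erase_of_mem (Finset.mem_univ y), Finset.card_univ, ZMod.card]
  -- apply master
  apply master S t C hScard
  · rw [hCcard]; exact htsum
  · rw [hCcard, ZMod.wilsons_lemma]
    simp
  · push_cast
    apply Finset.prod_ne_zero_iff.mpr
    intro i _
    apply Finset.prod_ne_zero_iff.mpr
    intro j hj
    have hij : i < j := Finset.mem_Ioi.mp hj
    have h1 : t i < t j := htmono i j hij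
    have h2 : t j ≤ 2 * s + 1 := htle j
    rw [sub_ne_zero]
    intro heq
    have := (ZMod.natCast_eq_natCast_iff' (t j) (t i) p).mp heq
    rw [Nat.mod_eq_of_lt (by omega), Nat.mod_eq_of_lt (by omega)] at this
    omega
  · intro x hx hinj
    rw [hC, Finset.mem_erase]
    refine ⟨?_, Finset.mem_univ _⟩
    intro heq
    refine hcon (Finset.image x Finset.univ) ?_ ?_ ?_
    · intro b hb
      obtain ⟨i, _, rfl⟩ := Finset.mem_image.mp hb
      exact hSsub i (Fintype.mem_piFinset.mp hx i)
    · rw [Finset.card_image_of_injective _ hinj, Finset.card_univ, Fintype.card_fin]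
    · rw [Finset.sum_image (fun a _ b _ h => hinj h)]
      simpa using heq
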